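/- Let f : [0,1] → [0,1] be a piecewise continuous interval map with no connections and no periodic points, let p ∈ [0,1] be such that the forward orbit {f^k(p) : k ≥ 0} avoids the partition set D, let μ_n = (1/n) Σ_{k=0}^{n-1} δ_{f^k(p)}, and suppose μ_{n_j} → μ weak*. Then any such weak* limit μ is non-atomic: μ({x}) = 0 for every x ∈ [0,1]. -/

import Mathlib

open Set Filter MeasureTheory Topology
open scoped ENNReal

/-- Data witnessing that `f` is a piecewise continuous interval map on `[0,1]`:
a partition `0 = pt 0 < pt 1 < ⋯ < pt (d+1) = 1` such that `f` is continuous on each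
open subinterval and has one-sided limits `wR i` (right limit at the left endpoint)
and `wL i` (left limit at the right endpoint) on each subinterval. -/
structure PiecewiseContData (f : ℝ → ℝ) where
  d : ℕ
  pt : Fin (d + 2) → ℝ
  mono : StrictMono pt
  first : pt 0 = 0
  last : pt (Fin.last (d + 1)) = 1
  cont : ∀ i : Fin (d + 1), ContinuousOn f (Ioo (pt i.castSucc) (pt i.succ))
  wR : Fin (d + 1) → ℝ
  wL : Fin (d + 1) → ℝ
  wR_lim : ∀ i : Fin (d + 1),
    Tendsto f (𝓝[Ioo (pt i.castSucc) (pt i.succ)] (pt i.castSucc)) (𝓝 (wR i))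
  wL_lim : ∀ i : Fin (d + 1),
    Tendsto f (𝓝[Ioo (pt i.castSucc) (pt i.succ)] (pt i.succ)) (𝓝 (wL i))

/-- The set `D` of partition points. -/
def PiecewiseContData.D {f : ℝ → ℝ} (P : PiecewiseContData f) : Set ℝ :=
  Set.range P.pt

/-- The set `W` of one-sided limit values of `f` at the partition points. -/
def PiecewiseContData.W {f : ℝ → ℝ} (P : PiecewiseContData f) : Set ℝ :=
  Set.range P.wR ∪ Set.range P.wL

/-- The no-connections condition: no forward iterate (`k ≥ 1`) of a partition point lies
in `D`, and no forward iterate (`k ≥ 0`) of a one-sided limit value lies in `D`. -/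
def PiecewiseContData.NoConnections {f : ℝ → ℝ} (P : PiecewiseContData f) : Prop :=
  (∀ i : Fin (P.d + 2), ∀ k : ℕ, 1 ≤ k → f^[k] (P.pt i) ∉ P.D) ∧
  (∀ w ∈ P.W, ∀ k : ℕ, f^[k] w ∉ P.D)

/-- `f` has no periodic points in `[0,1]`. -/
def NoPeriodicPts (f : ℝ → ℝ) : Prop :=
  ∀ x ∈ Icc (0:ℝ) 1, ∀ k : ℕ, 1 ≤ k → f^[k] x ≠ x

/-- The Birkhoff average `μ_n = (1/n) ∑_{k<n} δ_{f^k(p)}` of Dirac measures along the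
orbit of `p`. -/
noncomputable def birkhoffMeasure (f : ℝ → ℝ) (p : ℝ) (n : ℕ) : Measure ℝ :=
  (n : ℝ≥0∞)⁻¹ • ∑ k ∈ Finset.range n, Measure.dirac (f^[k] p)

noncomputable def bump (x δ y : ℝ) : ℝ := max 0 (min 1 (2 - |y - x| / δ))

lemma bump_continuous (x δ : ℝ) : Continuous (bump x δ) := by
  unfold bump; fun_prop

lemma bump_nonneg (x δ y : ℝ) : 0 ≤ bump x δ y := le_max_left _ _

lemma bump_le_one (x δ y : ℝ) : bump x δ y ≤ 1 :=
  max_le zero_le_one (min_le_left _ _)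

lemma bump_eq_one (x δ y : ℝ) (hδ : 0 < δ) (h : |y - x| ≤ δ) : bump x δ y = 1 := by
  have h1 : |y - x| / δ ≤ 1 := (div_le_one hδ).mpr h
  have : (1:ℝ) ≤ 2 - |y - x| / δ := by linarith
  unfold bump
  rw [min_eq_left this, max_eq_right zero_le_one]

lemma bump_eq_zero (x δ y : ℝ) (hδ : 0 < δ) (h : 2 * δ ≤ |y - x|) : bump x δ y = 0 := by
  have h1 : (2:ℝ) ≤ |y - x| / δ := (le_div_iff₀ hδ).mpr (by linarith)
  have h2 : 2 - |y - x| / δ ≤ 0 := by linarith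
  unfold bump
  rw [max_eq_left (le_trans (min_le_right _ _) h2)]

lemma bump_hcs (x δ : ℝ) (hδ : 0 < δ) : HasCompactSupport (bump x δ) := by
  apply HasCompactSupport.intro (isCompact_Icc (a := x - 2*δ) (b := x + 2*δ))
  intro y hy
  apply bump_eq_zero x δ y hδ
  rcases not_and_or.mp (by simpa [Set.mem_Icc, not_and_or] using hy : ¬(x - 2*δ ≤ y ∧ y ≤ x + 2*δ)) with h | h
  · push_neg at h
    rw [abs_sub_comm, abs_of_nonneg (by linarith)]; linarith
  · push_neg at h
    rw [abs_of_nonneg (by linarith)]; linarith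

lemma integrable_dirac' {φ : ℝ → ℝ} (hφ : Continuous φ) (a : ℝ) :
    Integrable φ (Measure.dirac a) := by
  refine ⟨hφ.aestronglyMeasurable, ?_⟩
  simp only [HasFiniteIntegral, lintegral_dirac]
  exact ENNReal.coe_lt_top


lemma integral_birkhoffMeasure (f : ℝ → ℝ) (p : ℝ) (N : ℕ) {φ : ℝ → ℝ} (hφ : Continuous φ) :
    ∫ y, φ y ∂(birkhoffMeasure f p N) = (N:ℝ)⁻¹ * ∑ k ∈ Finset.range N, φ (f^[k] p) := by
  unfold birkhoffMeasure
  rw [integral_smul_measure, integral_finset_sum_measure (fun k _ => integrable_dirac' hφ _)]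
  simp [ENNReal.toReal_inv, smul_eq_mul]


lemma meas_singleton_le_integral (μ : Measure ℝ) [IsProbabilityMeasure μ] (x : ℝ)
    {φ : ℝ → ℝ} (hφi : Integrable φ μ) (h0 : ∀ y, 0 ≤ φ y) (hx : φ x = 1) :
    (μ {x}).toReal ≤ ∫ y, φ y ∂μ := by
  have h1 : (μ {x}).toReal = ∫ y, Set.indicator {x} (fun _ => (1:ℝ)) y ∂μ := by
    rw [integral_indicator_const (1:ℝ) (measurableSet_singleton x)]
    simp
    rfl
  rw [h1]
  apply integral_mono ((integrable_const (1:ℝ)).indicator (measurableSet_singleton x)) hφi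
  intro y
  by_cases hy : y = x
  · subst hy
    simp [Set.indicator_of_mem, hx]
  · rw [Set.indicator_of_notMem (by simpa using hy)]; exact h0 y

lemma exists_close_pair (M N : ℕ) (hM : 1 ≤ M) (S : Finset ℕ) (hS : S ⊆ Finset.range N)
    (hcard : N / M + 1 < S.card) : ∃ a ∈ S, ∃ b ∈ S, a < b ∧ b - a ≤ M := by
  by_contra h
  push_neg at h
  have key : ∀ a ∈ S, ∀ b ∈ S, a < b → a / M < b / M := by
    intro a ha b hb hlt
    have h1 := h a ha b hb hlt
    have hb' : a + M ≤ b := by omega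
    calc a / M < a / M + 1 := Nat.lt_succ_self _
      _ = (a + M) / M := (Nat.add_div_right a hM).symm
      _ ≤ b / M := Nat.div_le_div_right hb'
  have hinj : Set.InjOn (· / M) S := by
    intro a ha b hb hab
    by_contra hne
    rcases lt_or_gt_of_ne hne with hlt | hlt
    · exact absurd hab (key a ha b hb hlt).ne
    · exact absurd hab.symm (key b hb a ha hlt).ne
  have hle : S.card ≤ (Finset.range (N / M + 1)).card := by
    apply Finset.card_le_card_of_injOn (· / M) _ hinj
    intro s hs
    have : s < N := Finset.mem_range.mp (hS hs)
    exact Finset.mem_range.mpr (Nat.lt_succ_of_le (Nat.div_le_div_right this.le))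
  rw [Finset.card_range] at hle
  omega

lemma iter_mem_Icc {f : ℝ → ℝ} (hf : MapsTo f (Icc (0:ℝ) 1) (Icc (0:ℝ) 1))
    {z : ℝ} (hz : z ∈ Icc (0:ℝ) 1) (k : ℕ) : f^[k] z ∈ Icc (0:ℝ) 1 := by
  induction k with
  | zero => simpa
  | succ k ih => rw [Function.iterate_succ_apply']; exact hf ih

namespace PiecewiseContData
variable {f : ℝ → ℝ} (P : PiecewiseContData f)

lemma pt_mem_Icc (i : Fin (P.d + 2)) : P.pt i ∈ Icc (0:ℝ) 1 := by
  constructor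
  · rw [← P.first]; exact P.mono.monotone (Fin.zero_le i)
  · rw [← P.last]; exact P.mono.monotone (Fin.le_last i)

lemma continuousAt_of_not_mem_D {z : ℝ} (hz : z ∈ Icc (0:ℝ) 1) (hzD : z ∉ P.D) :
    ContinuousAt f z := by
  classical
  have hne : ∀ i, z ≠ P.pt i := fun i h => hzD ⟨i, h.symm⟩
  obtain ⟨i, h1, h2⟩ : ∃ i : Fin (P.d + 1), P.pt i.castSucc < z ∧ z < P.pt i.succ := by
    set S := Finset.univ.filter (fun i : Fin (P.d + 2) => P.pt i < z) with hS
    have h0 : (0 : Fin (P.d + 2)) ∈ S := by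
      rw [hS, Finset.mem_filter]
      refine ⟨Finset.mem_univ _, ?_⟩
      rw [P.first]
      exact lt_of_le_of_ne hz.1 (by simpa [P.first] using (hne 0).symm)
    have hSne : S.Nonempty := ⟨0, h0⟩
    obtain ⟨i₀, hi₀mem, hi₀max⟩ : ∃ i₀ ∈ S, ∀ b ∈ S, b ≤ i₀ :=
      ⟨S.max' hSne, S.max'_mem hSne, fun b hb => S.le_max' b hb⟩
    have hi₀ : P.pt i₀ < z := (Finset.mem_filter.mp hi₀mem).2
    have hzlt1 : z < 1 := lt_of_le_of_ne hz.2 (by rw [← P.last]; exact hne _)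
    have hval : i₀.val < P.d + 1 := by
      by_contra h
      have h' : i₀ = Fin.last (P.d + 1) := Fin.ext (by have := i₀.isLt; simp [Fin.last]; omega)
      rw [h', P.last] at hi₀
      linarith
    refine ⟨⟨i₀.val, hval⟩, ?_, ?_⟩
    · have : (⟨i₀.val, hval⟩ : Fin (P.d + 1)).castSucc = i₀ := by
        apply Fin.ext; simp
      rw [this]; exact hi₀
    · have hsucc : ((⟨i₀.val, hval⟩ : Fin (P.d + 1)).succ : Fin (P.d + 2)) =
        ⟨i₀.val + 1, by omega⟩ := by apply Fin.ext; simp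
      rw [hsucc]
      have hnotmem : (⟨i₀.val + 1, by omega⟩ : Fin (P.d + 2)) ∉ S := by
        intro hmem
        have := hi₀max _ hmem
        rw [Fin.le_def] at this
        simp at this
      have hnlt : ¬ P.pt ⟨i₀.val + 1, by omega⟩ < z := by
        intro hlt
        exact hnotmem (by rw [hS]; exact Finset.mem_filter.mpr ⟨Finset.mem_univ _, hlt⟩)
      exact lt_of_le_of_ne (not_lt.mp hnlt) (hne _)
  exact (P.cont i).continuousAt (Ioo_mem_nhds h1 h2)

lemma continuousAt_iterate (hf : MapsTo f (Icc (0:ℝ) 1) (Icc (0:ℝ) 1)) (m : ℕ) {z : ℝ}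
    (hz : z ∈ Icc (0:ℝ) 1) (h : ∀ j, j < m → f^[j] z ∉ P.D) : ContinuousAt f^[m] z := by
  induction m with
  | zero => rw [Function.iterate_zero]; exact continuousAt_id
  | succ m ih =>
    rw [Function.iterate_succ']
    have h1 : ContinuousAt f (f^[m] z) :=
      P.continuousAt_of_not_mem_D (iter_mem_Icc hf hz m) (h m (Nat.lt_succ_self m))
    exact h1.comp (ih (fun j hj => h j (hj.trans (Nat.lt_succ_self m))))

lemma tendsto_W_right {z : ℝ} {i₀ : Fin (P.d + 2)} (hz : P.pt i₀ = z)
    {α : Type*} {l : Filter α} [l.NeBot] (u : α → ℝ) (hu : Tendsto u l (𝓝 z))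
    (hgt : ∀ᶠ i in l, z < u i) (hle : ∀ᶠ i in l, u i ≤ 1) :
    ∃ w ∈ P.W, Tendsto (fun i => f (u i)) l (𝓝 w) := by
  obtain ⟨i, hi1, hi2⟩ := (hgt.and hle).exists
  have hz1 : z < 1 := lt_of_lt_of_le hi1 hi2
  have hval : i₀.val < P.d + 1 := by
    by_contra h
    have h' : i₀ = Fin.last (P.d + 1) := Fin.ext (by have := i₀.isLt; simp [Fin.last]; omega)
    rw [h', P.last] at hz
    linarith
  set j : Fin (P.d + 1) := ⟨i₀.val, hval⟩ with hj
  have hcs : j.castSucc = i₀ := by apply Fin.ext; simp [hj]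
  have hlt : z < P.pt j.succ := by
    rw [← hz, ← hcs]
    exact P.mono Fin.castSucc_lt_succ
  refine ⟨P.wR j, Or.inl ⟨j, rfl⟩, ?_⟩
  have hIoo : Tendsto u l (𝓝[Ioo (P.pt j.castSucc) (P.pt j.succ)] z) := by
    rw [tendsto_nhdsWithin_iff]
    refine ⟨hu, ?_⟩
    filter_upwards [hu.eventually_lt_const hlt, hgt] with i h2i h1i
    exact ⟨by rw [hcs, hz]; exact h1i, h2i⟩
  have hzz : P.pt j.castSucc = z := by rw [hcs]; exact hz
  rw [← hzz] at hIoo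
  exact (P.wR_lim j).comp hIoo

lemma tendsto_W_left {z : ℝ} {i₀ : Fin (P.d + 2)} (hz : P.pt i₀ = z)
    {α : Type*} {l : Filter α} [l.NeBot] (u : α → ℝ) (hu : Tendsto u l (𝓝 z))
    (hlt : ∀ᶠ i in l, u i < z) (hge : ∀ᶠ i in l, 0 ≤ u i) :
    ∃ w ∈ P.W, Tendsto (fun i => f (u i)) l (𝓝 w) := by
  obtain ⟨i, hi1, hi2⟩ := (hlt.and hge).exists
  have hz0 : 0 < z := lt_of_le_of_lt hi2 hi1
  have hval0 : 1 ≤ i₀.val := by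
    by_contra h
    have h' : i₀ = 0 := Fin.ext (by rw [Fin.val_zero]; omega)
    rw [h', P.first] at hz
    linarith
  set j : Fin (P.d + 1) := ⟨i₀.val - 1, by have := i₀.isLt; omega⟩ with hj
  have hsucc : j.succ = i₀ := by apply Fin.ext; simp [hj]; omega
  have hlt2 : P.pt j.castSucc < z := by
    rw [← hz, ← hsucc]
    exact P.mono Fin.castSucc_lt_succ
  refine ⟨P.wL j, Or.inr ⟨j, rfl⟩, ?_⟩
  have hIoo : Tendsto u l (𝓝[Ioo (P.pt j.castSucc) (P.pt j.succ)] z) := by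
    rw [tendsto_nhdsWithin_iff]
    refine ⟨hu, ?_⟩
    filter_upwards [hu.eventually_const_lt hlt2, hlt] with i h2i h1i
    exact ⟨h2i, by rw [hsucc, hz]; exact h1i⟩
  have hzz : P.pt j.succ = z := by rw [hsucc]; exact hz
  rw [← hzz] at hIoo
  exact (P.wL_lim j).comp hIoo

end PiecewiseContData


/-- any weak* limit `μ` of a subsequence of the Birkhoff averages along the
orbit of `p` (whose orbit avoids the partition set `D`) is non-atomic. -/
theorem stmt4 (f : ℝ → ℝ) (hf : MapsTo f (Icc (0:ℝ) 1) (Icc (0:ℝ) 1))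
    (P : PiecewiseContData f) (hnc : P.NoConnections) (hnp : NoPeriodicPts f)
    (p : ℝ) (hp : p ∈ Icc (0:ℝ) 1) (hporb : ∀ k : ℕ, f^[k] p ∉ P.D)
    (n : ℕ → ℕ) (hn : StrictMono n) (μ : Measure ℝ) (hμ : IsProbabilityMeasure μ)
    (hconv : ∀ φ : ℝ → ℝ, Continuous φ →
      Tendsto (fun j => ∫ x, φ x ∂(birkhoffMeasure f p (n j))) atTop
        (𝓝 (∫ x, φ x ∂μ))) :
    ∀ x : ℝ, μ {x} = 0 := by
  classical
  intro x
  by_contra hx0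
  have hεpos : 0 < (μ {x}).toReal := ENNReal.toReal_pos hx0 (measure_ne_top μ _)
  set ε := (μ {x}).toReal with hεdef
  have horb : ∀ k, f^[k] p ∈ Icc (0:ℝ) 1 := fun k => iter_mem_Icc hf hp k
  have key : ∀ δ : ℝ, 0 < δ → ∃ N : ℕ, (4:ℝ)/ε < N ∧
      ε/2 ≤ (N:ℝ)⁻¹ * ∑ k ∈ Finset.range N, bump x δ (f^[k] p) := by
    intro δ hδ
    have hφc := bump_continuous x δ
    have hμint : Integrable (bump x δ) μ :=
      hφc.integrable_of_hasCompactSupport (bump_hcs x δ hδ)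
    have hlb : ε ≤ ∫ y, bump x δ y ∂μ :=
      meas_singleton_le_integral μ x hμint (bump_nonneg x δ)
        (bump_eq_one x δ x hδ (by simp [hδ.le]))
    have h1 : ∀ᶠ j in atTop, ε/2 ≤ ∫ y, bump x δ y ∂(birkhoffMeasure f p (n j)) :=
      (hconv _ hφc).eventually (eventually_ge_nhds (lt_of_lt_of_le (half_lt_self hεpos) hlb))
    have h2 : ∀ᶠ j in atTop, (4:ℝ)/ε < n j := by
      have hnt : Tendsto (fun j => (n j : ℝ)) atTop atTop :=
        tendsto_natCast_atTop_atTop.comp hn.tendsto_atTop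
      exact hnt.eventually_gt_atTop _
    obtain ⟨j, hj1, hj2⟩ := (h1.and h2).exists
    refine ⟨n j, hj2, ?_⟩
    rwa [integral_birkhoffMeasure f p _ hφc] at hj1
  obtain ⟨M, hM1, hδk⟩ : ∃ M : ℕ, 1 ≤ M ∧ ∀ δ : ℝ, 0 < δ → ∃ k m : ℕ, 1 ≤ m ∧ m ≤ M ∧
      |f^[k] p - x| ≤ 2*δ ∧ |f^[k+m] p - x| ≤ 2*δ := by
    refine ⟨max 1 ⌈(4:ℝ)/ε⌉₊, le_max_left _ _, ?_⟩
    intro δ hδ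
    obtain ⟨N, hN1, hN2⟩ := key δ hδ
    have hN0 : 0 < (N:ℝ) := lt_trans (by positivity) hN1
    set M := max 1 ⌈(4:ℝ)/ε⌉₊ with hMdef
    have hM1 : 1 ≤ M := le_max_left _ _
    set S := (Finset.range N).filter (fun k => |f^[k] p - x| ≤ 2*δ) with hSdef
    have hsum : ∑ k ∈ Finset.range N, bump x δ (f^[k] p) ≤ (S.card : ℝ) := by
      calc ∑ k ∈ Finset.range N, bump x δ (f^[k] p)
          ≤ ∑ k ∈ Finset.range N, (if |f^[k] p - x| ≤ 2*δ then (1:ℝ) else 0) := by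
            apply Finset.sum_le_sum
            intro k _
            split_ifs with h
            · exact bump_le_one x δ _
            · exact le_of_eq (bump_eq_zero x δ _ hδ (le_of_not_ge h))
        _ = (S.card : ℝ) := by rw [Finset.sum_boole, hSdef]
    have hSN : ε/2 * N ≤ (S.card : ℝ) := by
      rw [inv_mul_eq_div, le_div_iff₀ hN0] at hN2
      linarith
    have hMR : (4:ℝ)/ε ≤ (M:ℝ) := by
      refine le_trans (Nat.le_ceil _) ?_
      exact_mod_cast le_max_right 1 _
    have hM0 : 0 < (M:ℝ) := by exact_mod_cast hM1
    have hdiv : N / M + 1 < S.card := by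
      have h1 : ((N / M : ℕ) : ℝ) ≤ (N:ℝ) / (M:ℝ) := Nat.cast_div_le
      have hMR' : (4:ℝ) ≤ (M:ℝ) * ε := by rwa [div_le_iff₀ hεpos] at hMR
      have hN1' : (4:ℝ) < (N:ℝ) * ε := by rwa [div_lt_iff₀ hεpos] at hN1
      have h2 : (N:ℝ)/(M:ℝ) ≤ (N:ℝ) * (ε/4) := by
        rw [div_le_iff₀ hM0]
        nlinarith
      have h3 : (N:ℝ) * (ε/4) + 1 < ε/2 * N := by nlinarith
      have h4 : ((N / M + 1 : ℕ) : ℝ) < (S.card : ℝ) := by push_cast; linarith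
      exact_mod_cast h4
    obtain ⟨a, ha, b, hb, hab, hba⟩ :=
      exists_close_pair M N hM1 S (Finset.filter_subset _ _) hdiv
    refine ⟨a, b - a, by omega, hba, (Finset.mem_filter.mp ha).2, ?_⟩
    have hab' : a + (b - a) = b := by omega
    rw [hab']
    exact (Finset.mem_filter.mp hb).2
  obtain ⟨m, hm1, hm⟩ : ∃ m : ℕ, 1 ≤ m ∧ ∀ δ : ℝ, 0 < δ → ∃ k : ℕ,
      |f^[k] p - x| ≤ δ ∧ |f^[k+m] p - x| ≤ δ := by
    by_contra hcon
    push_neg at hcon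
    have hcon' : ∀ m : ℕ, ∃ δ : ℝ, 0 < δ ∧
        (1 ≤ m → ∀ k, ¬(|f^[k] p - x| ≤ δ ∧ |f^[k+m] p - x| ≤ δ)) := by
      intro m
      by_cases h : 1 ≤ m
      · obtain ⟨δ, hδ, hk⟩ := hcon m h
        exact ⟨δ, hδ, fun _ k hc => absurd hc.2 (not_le.mpr (hk k hc.1))⟩
      · exact ⟨1, one_pos, fun h1 => absurd h1 h⟩
    choose δ' hδ'pos hδ' using hcon'
    have hne : (Finset.Icc 1 M).Nonempty := ⟨1, Finset.mem_Icc.mpr ⟨le_refl 1, hM1⟩⟩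
    obtain ⟨i₁, hi₁mem, hi₁eq⟩ := Finset.exists_mem_eq_inf' hne δ'
    have hδ₀pos : 0 < (Finset.Icc 1 M).inf' hne δ' := hi₁eq ▸ hδ'pos i₁
    set δ₀ := (Finset.Icc 1 M).inf' hne δ' with hδ₀def
    obtain ⟨k, m, h1m, hmM, hk1, hk2⟩ := hδk (δ₀/2) (by positivity)
    have hmem : m ∈ Finset.Icc 1 M := Finset.mem_Icc.mpr ⟨h1m, hmM⟩
    have hle : δ₀ ≤ δ' m := Finset.inf'_le δ' hmem
    have h2 : 2 * (δ₀/2) = δ₀ := by ring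
    rw [h2] at hk1 hk2
    exact hδ' m h1m k ⟨hk1.trans hle, hk2.trans hle⟩
  choose k hk1 hk2 using fun i : ℕ => hm (1/((i:ℝ)+1)) (by positivity)
  have hlim0 : Tendsto (fun i : ℕ => 1/((i:ℝ)+1)) atTop (𝓝 0) :=
    tendsto_one_div_add_atTop_nhds_zero_nat
  have hyx : Tendsto (fun i => f^[k i] p) atTop (𝓝 x) := by
    rw [tendsto_iff_dist_tendsto_zero]
    apply squeeze_zero (fun i => dist_nonneg) (fun i => ?_) hlim0
    rw [Real.dist_eq]
    exact hk1 i
  have hfyx : Tendsto (fun i => f^[m] (f^[k i] p)) atTop (𝓝 x) := by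
    rw [tendsto_iff_dist_tendsto_zero]
    apply squeeze_zero (fun i => dist_nonneg) (fun i => ?_) hlim0
    rw [Real.dist_eq, ← Function.iterate_add_apply, Nat.add_comm]
    exact hk2 i
  have hxIcc : x ∈ Icc (0:ℝ) 1 :=
    isClosed_Icc.mem_of_tendsto hyx (Eventually.of_forall fun i => horb (k i))
  by_cases hD : ∃ j, f^[j] x ∈ P.D ∧ j < m
  · have hQ : ∃ j, f^[j] x ∈ P.D := ⟨hD.choose, hD.choose_spec.1⟩
    have hj₀D : f^[Nat.find hQ] x ∈ P.D := Nat.find_spec hQ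
    set j₀ := Nat.find hQ with hj₀def
    have hj₀m : j₀ < m := lt_of_le_of_lt (Nat.find_min' hQ hD.choose_spec.1) hD.choose_spec.2
    have hcont : ContinuousAt f^[j₀] x :=
      P.continuousAt_iterate hf j₀ hxIcc (fun i hi => Nat.find_min hQ (hj₀def ▸ hi))
    set z := f^[j₀] x with hzdef
    obtain ⟨i₀, hi₀⟩ := id hj₀D
    set u : ℕ → ℝ := fun i => f^[j₀] (f^[k i] p) with hudef
    have huz : Tendsto u atTop (𝓝 z) := hcont.tendsto.comp hyx
    have huorb : ∀ i, u i = f^[j₀ + k i] p := fun i =>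
      (Function.iterate_add_apply f j₀ (k i) p).symm
    have huD : ∀ i, u i ∉ P.D := fun i => (huorb i) ▸ hporb _
    have huI : ∀ i, u i ∈ Icc (0:ℝ) 1 := fun i => (huorb i) ▸ horb _
    have hune : ∀ i, u i ≠ z := fun i h => huD i (by rw [h]; exact ⟨i₀, hi₀⟩)
    obtain ⟨w, hwW, l, hlne, hlle, hwt⟩ : ∃ w ∈ P.W, ∃ l : Filter ℕ, l.NeBot ∧ l ≤ atTop ∧
        Tendsto (fun i => f (u i)) l (𝓝 w) := by
      by_cases hfr : ∃ᶠ i in atTop, z < u i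
      · set l : Filter ℕ := atTop ⊓ 𝓟 {i | z < u i} with hldef
        haveI hne : l.NeBot := frequently_iff_neBot.mp hfr
        have he1 : ∀ᶠ i in l, z < u i := by
          rw [hldef, eventually_inf_principal]
          exact Eventually.of_forall fun i hi => hi
        obtain ⟨w, hwW, hwt⟩ := P.tendsto_W_right (l := l) hi₀ u
          (huz.mono_left inf_le_left) he1 (Eventually.of_forall fun i => (huI i).2)
        exact ⟨w, hwW, l, hne, inf_le_left, hwt⟩
      · have hev : ∀ᶠ i in atTop, u i < z := by
          rw [not_frequently] at hfr
          filter_upwards [hfr] with i hi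
          exact lt_of_le_of_ne (not_lt.mp hi) (hune i)
        set l : Filter ℕ := atTop ⊓ 𝓟 {i | u i < z} with hldef
        haveI hne : l.NeBot := frequently_iff_neBot.mp hev.frequently
        have he1 : ∀ᶠ i in l, u i < z := by
          rw [hldef, eventually_inf_principal]
          exact Eventually.of_forall fun i hi => hi
        obtain ⟨w, hwW, hwt⟩ := P.tendsto_W_left (l := l) hi₀ u
          (huz.mono_left inf_le_left) he1 (Eventually.of_forall fun i => (huI i).1)
        exact ⟨w, hwW, l, hne, inf_le_left, hwt⟩
    haveI := hlne
    have hwD : ∀ j : ℕ, f^[j] w ∉ P.D := fun j => hnc.2 w hwW j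
    have hwI : w ∈ Icc (0:ℝ) 1 :=
      isClosed_Icc.mem_of_tendsto hwt (Eventually.of_forall fun i => hf (huI i))
    have hcr : ContinuousAt f^[m - (j₀ + 1)] w :=
      P.continuousAt_iterate hf _ hwI (fun j _ => hwD j)
    have hchain : Tendsto (fun i => f^[m - (j₀ + 1)] (f (u i))) l
        (𝓝 (f^[m - (j₀ + 1)] w)) := hcr.tendsto.comp hwt
    have hchain' : Tendsto (fun i => f^[m] (f^[k i] p)) l (𝓝 (f^[m - (j₀ + 1)] w)) := by
      apply hchain.congr
      intro i
      show f^[m - (j₀ + 1)] (f^[1] (f^[j₀] (f^[k i] p))) = _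
      rw [← Function.iterate_add_apply, ← Function.iterate_add_apply]
      congr 1
      omega
    have hx' : Tendsto (fun i => f^[m] (f^[k i] p)) l (𝓝 x) := hfyx.mono_left hlle
    have hxw : x = f^[m - (j₀ + 1)] w := tendsto_nhds_unique hx' hchain'
    refine hwD (j₀ + (m - (j₀ + 1))) ?_
    have heq : f^[j₀ + (m - (j₀ + 1))] w = z := by
      rw [Function.iterate_add_apply, ← hxw]
    rw [heq]
    exact hj₀D
  · push_neg at hD
    have hc : ContinuousAt f^[m] x :=
      P.continuousAt_iterate hf m hxIcc (fun j hj hjD => absurd hj (not_lt.mpr (hD j hjD)))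
    have hcomp := hc.tendsto.comp hyx
    exact hnp x hxIcc m hm1 (tendsto_nhds_unique hcomp hfyx)
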